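/- Let Q be a quota widget of type Q(δ,ℓ,r,M) with root x inside a food web F, and let P be a ½-viable set containing at least ℓ' ≥ ℓ prey of x outside Q. Then there exists a ½-viable set P' that agrees with P outside Q, contains x, and contains exactly max(δ,r) − ℓ' + (M−1)·max(0, r−ℓ') vertices of Q other than x. -/

import Mathlib

/-- The set of in-neighbours (prey) of `w` in the directed graph `F`. -/
def inN {V : Type*} (F : V → V → Prop) (w : V) : Set V := {u | F u w}

/-- `F` is a DAG. -/
def Acyclic {V : Type*} (F : V → V → Prop) : Prop := ∀ v, ¬ Relation.TransGen F v v

/-- `P` is ½-viable: every non-source vertex of `P` has at least half of its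
in-neighbours in `P`. -/
def HalfViable {V : Type*} (F : V → V → Prop) (P : Set V) : Prop :=
  ∀ w ∈ P, inN F w ≠ ∅ → (inN F w).ncard ≤ 2 * (inN F w ∩ P).ncard


lemma ncard_biUnion_aux {V : Type*} [Fintype V] (n : ℕ) :
    ∀ (s : Set V) (L : V → Set V),
    (∀ m ∈ s, (L m).ncard = n) →
    (∀ a ∈ s, ∀ b ∈ s, a ≠ b → Disjoint (L a) (L b)) →
    (⋃ m ∈ s, L m).ncard = s.ncard * n := by
  intro s
  refine Set.Finite.induction_on s (s.toFinite) ?_ ?_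
  · simp
  · intro a t hat htfin ih L hc hd
    have h1 : (⋃ m ∈ insert a t, L m) = L a ∪ ⋃ m ∈ t, L m := by
      simp [Set.biUnion_insert]
    rw [h1, Set.ncard_union_eq ?_ (Set.toFinite _) (Set.toFinite _)]
    · rw [hc a (Set.mem_insert a t), ih L (fun m hm => hc m (Set.mem_insert_of_mem _ hm))
        (fun p hp q hq => hd p (Set.mem_insert_of_mem _ hp) q (Set.mem_insert_of_mem _ hq)),
        Set.ncard_insert_of_notMem hat htfin]
      ring
    · rw [Set.disjoint_iUnion_right]
      intro m
      rw [Set.disjoint_iUnion_right]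
      intro hm
      exact hd a (Set.mem_insert a t) m (Set.mem_insert_of_mem _ hm)
        (fun h => hat (h ▸ hm))

/-- Let `Q` be a quota widget of type Q(δ,ℓ,r,M) with root `x` inside a food
web `F`, and let `P` be a ½-viable set containing `ℓ' ≥ ℓ` prey of `x` outside `Q`.
Then there exists a ½-viable set `P'` that agrees with `P` outside `Q`, contains `x`,
and contains exactly `max(δ,r) − ℓ' + (M−1)·max(0, r−ℓ')` vertices of `Q` other than `x`. -/
theorem stmt_5 {V : Type*} [Fintype V] (F : V → V → Prop) (hacyc : Acyclic F)
    (B M δ ℓ r : ℕ) (hB : 1 ≤ B) (hM : 1 ≤ M) (hlr : ℓ ≤ r)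
    (x : V) (Q Big Med Small : Set V)
    (hxQ : x ∈ Q) (hBQ : Big ⊆ Q) (hMQ : Med ⊆ Q) (hSQ : Small ⊆ Q)
    (hxB : x ∉ Big) (hxM : x ∉ Med) (hxS : x ∉ Small)
    (hBM : Disjoint Big Med) (hBS : Disjoint Big Small) (hMS : Disjoint Med Small)
    (hBcard : Big.ncard = ℓ + (r - δ))
    (hMcard : Med.ncard = r - ℓ)
    (hScard : Small.ncard = δ - r)
    (hinx : inN F x ∩ Q = Big ∪ Med ∪ Small)
    (hext : (inN F x \ Q).ncard = δ)
    (hbig : ∀ b ∈ Big, inN F b ⊆ Q ∧ (inN F b).ncard = 2 * (B - 1))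
    (hmed : ∀ m ∈ Med, inN F m ⊆ Q ∧ (inN F m).ncard = 2 * (M - 1))
    (hsmall : ∀ s ∈ Small, inN F s = ∅)
    (hleafdisj : ∀ a ∈ Big ∪ Med, ∀ b ∈ Big ∪ Med, a ≠ b → Disjoint (inN F a) (inN F b))
    (hleaf : ∀ a ∈ Big ∪ Med, ∀ u ∈ inN F a,
      inN F u = ∅ ∧ (∀ w, F u w → w = a) ∧ u ∉ insert x (Big ∪ Med ∪ Small))
    (hQ : Q = insert x (Big ∪ Med ∪ Small) ∪ (⋃ a ∈ Big ∪ Med, inN F a))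
    (hclosed : ∀ u ∈ Q, u ≠ x → ∀ w, (F u w → w ∈ Q) ∧ (F w u → w ∈ Q))
    (P : Set V) (hP : HalfViable F P)
    (ℓ' : ℕ) (hℓ' : ℓ' = ((inN F x \ Q) ∩ P).ncard) (hℓℓ' : ℓ ≤ ℓ') :
    ∃ P' : Set V, HalfViable F P' ∧ x ∈ P' ∧
      (∀ w ∉ Q, (w ∈ P' ↔ w ∈ P)) ∧
      ((P' ∩ Q) \ {x}).ncard = (max δ r - ℓ') + (M - 1) * (r - ℓ') := by
  classical
  -- number of small vertices to use
  set K : ℕ := δ - max ℓ' r with hK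
  -- choose K small vertices
  obtain ⟨S₀, hS₀sub, hS₀card⟩ :=
    Set.exists_subset_card_eq (s := Small) (n := K) (by rw [hScard]; omega)
  -- choose r - ℓ' medium vertices
  obtain ⟨Mc, hMcsub, hMccard⟩ :=
    Set.exists_subset_card_eq (s := Med) (n := r - ℓ') (by rw [hMcard]; omega)
  -- choose M-1 leaves for each medium vertex
  have hch : ∀ m : V, ∃ t : Set V, m ∈ Med → (t ⊆ inN F m ∧ t.ncard = M - 1) := by
    intro m
    by_cases hm : m ∈ Med
    · obtain ⟨t, ht, htc⟩ := Set.exists_subset_card_eq (s := inN F m) (n := M - 1)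
        (by rw [(hmed m hm).2]; omega)
      exact ⟨t, fun _ => ⟨ht, htc⟩⟩
    · exact ⟨∅, fun h => absurd h hm⟩
  choose L hL using hch
  set T : Set V := ⋃ m ∈ Mc, L m with hT
  set R : Set V := S₀ ∪ Mc ∪ T with hR
  set P' : Set V := (P \ Q) ∪ insert x R with hP'
  -- basic inclusions
  have hLsub : ∀ m ∈ Mc, L m ⊆ inN F m := fun m hm => (hL m (hMcsub hm)).1
  have hLcard : ∀ m ∈ Mc, (L m).ncard = M - 1 := fun m hm => (hL m (hMcsub hm)).2
  have hTnot : ∀ u ∈ T, u ∉ insert x (Big ∪ Med ∪ Small) := by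
    intro u hu
    simp only [hT, Set.mem_iUnion] at hu
    obtain ⟨m, hm, hum⟩ := hu
    exact (hleaf m (Or.inr (hMcsub hm)) u (hLsub m hm hum)).2.2
  have hTQ : T ⊆ Q := by
    intro u hu
    simp only [hT, Set.mem_iUnion] at hu
    obtain ⟨m, hm, hum⟩ := hu
    exact (hmed m (hMcsub hm)).1 (hLsub m hm hum)
  have hRQ : R ⊆ Q := by
    rintro u (hu | hu)
    · rcases hu with hu | hu
      · exact hSQ (hS₀sub hu)
      · exact hMQ (hMcsub hu)
    · exact hTQ hu
  have hxR : x ∉ R := by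
    rintro (hu | hu)
    · rcases hu with hu | hu
      · exact hxS (hS₀sub hu)
      · exact hxM (hMcsub hu)
    · exact hTnot x hu (Set.mem_insert x _)
  have hxP' : x ∈ P' := Or.inr (Set.mem_insert x R)
  -- agreement outside Q
  have hagree : ∀ w ∉ Q, (w ∈ P' ↔ w ∈ P) := by
    intro w hw
    constructor
    · rintro (hw' | hw')
      · exact hw'.1
      · rcases hw' with rfl | hw'
        · exact absurd hxQ hw
        · exact absurd (hRQ hw') hw
    · intro hw'
      exact Or.inl ⟨hw', hw⟩
  -- the part of P' inside Q minus x is exactly R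
  have hPQR : (P' ∩ Q) \ {x} = R := by
    ext u
    simp only [Set.mem_diff, Set.mem_inter_iff, Set.mem_singleton_iff]
    constructor
    · rintro ⟨⟨hu | hu, huQ⟩, hux⟩
      · exact absurd huQ hu.2
      · rcases hu with rfl | hu
        · exact absurd rfl hux
        · exact hu
    · intro hu
      refine ⟨⟨Or.inr (Set.mem_insert_of_mem x hu), hRQ hu⟩, fun h => hxR (h ▸ hu)⟩
  -- cardinality of T
  have hTcard : T.ncard = (r - ℓ') * (M - 1) := by
    rw [hT, ncard_biUnion_aux (M - 1) Mc L hLcard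
      (fun a ha b hb hab => hleafdisj a (Or.inr (hMcsub ha)) b (Or.inr (hMcsub hb)) hab
        |>.mono (hLsub a ha) (hLsub b hb)), hMccard]
  -- disjointness inside R
  have hS₀Mc : Disjoint S₀ Mc := (hMS.symm.mono hS₀sub hMcsub)
  have hSMT : Disjoint (S₀ ∪ Mc) T := by
    rw [Set.disjoint_right]
    intro u hu
    have := hTnot u hu
    rintro (h | h)
    · exact this (Set.mem_insert_of_mem _ (Or.inr (hS₀sub h)))
    · exact this (Set.mem_insert_of_mem _ (Or.inl (Or.inr (hMcsub h))))
  have hRcard : R.ncard = K + (r - ℓ') + (r - ℓ') * (M - 1) := by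
    rw [hR, Set.ncard_union_eq hSMT (Set.toFinite _) (Set.toFinite _),
      Set.ncard_union_eq hS₀Mc (Set.toFinite _) (Set.toFinite _),
      hS₀card, hMccard, hTcard]
  -- key: for w outside Q, prey of w in P are also in P'
  have hmono : ∀ w ∉ Q, inN F w ∩ P ⊆ inN F w ∩ P' := by
    intro w hw u ⟨hu1, hu2⟩
    refine ⟨hu1, ?_⟩
    by_cases huQ : u ∈ Q
    · by_cases hux : u = x
      · exact hux ▸ hxP'
      · exact absurd ((hclosed u huQ hux w).1 hu1) hw
    · exact Or.inl ⟨hu2, huQ⟩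
  -- total in-degree of x
  have hinx_card : (inN F x).ncard = (ℓ + (r - δ)) + (r - ℓ) + (δ - r) + δ := by
    have h1 : inN F x = (inN F x ∩ Q) ∪ (inN F x \ Q) := by
      simp [Set.inter_union_diff]
    rw [h1, Set.ncard_union_eq (Set.disjoint_sdiff_right.mono_left Set.inter_subset_right)
        (Set.toFinite _) (Set.toFinite _), hext, hinx,
      Set.ncard_union_eq (hBS.union_left hMS) (Set.toFinite _) (Set.toFinite _),
      Set.ncard_union_eq hBM (Set.toFinite _) (Set.toFinite _),
      hBcard, hMcard, hScard]
  -- lower bound on prey of x in P'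
  have hxlow : ℓ' + K + (r - ℓ') ≤ (inN F x ∩ P').ncard := by
    have hsub : ((inN F x \ Q) ∩ P) ∪ (S₀ ∪ Mc) ⊆ inN F x ∩ P' := by
      rintro u (hu | hu)
      · exact ⟨hu.1.1, Or.inl ⟨hu.2, hu.1.2⟩⟩
      · have huQ : u ∈ inN F x ∩ Q := by
          rw [hinx]
          rcases hu with hu | hu
          · exact Or.inr (hS₀sub hu)
          · exact Or.inl (Or.inr (hMcsub hu))
        exact ⟨huQ.1, Or.inr (Set.mem_insert_of_mem _ (Or.inl hu))⟩
    have hdisj : Disjoint ((inN F x \ Q) ∩ P) (S₀ ∪ Mc) := by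
      rw [Set.disjoint_left]
      rintro u ⟨⟨_, huQ⟩, _⟩ (hu | hu)
      · exact huQ (hSQ (hS₀sub hu))
      · exact huQ (hMQ (hMcsub hu))
    calc ℓ' + K + (r - ℓ')
        = (((inN F x \ Q) ∩ P) ∪ (S₀ ∪ Mc)).ncard := by
          rw [Set.ncard_union_eq hdisj (Set.toFinite _) (Set.toFinite _),
            Set.ncard_union_eq hS₀Mc (Set.toFinite _) (Set.toFinite _),
            hS₀card, hMccard, ← hℓ']
          ring
      _ ≤ (inN F x ∩ P').ncard := Set.ncard_le_ncard hsub (Set.toFinite _)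
  -- half-viability of P'
  have hHV : HalfViable F P' := by
    intro w hw hne
    rcases hw with hw | hw
    · -- w is in P outside Q
      calc (inN F w).ncard ≤ 2 * (inN F w ∩ P).ncard := hP w hw.1 hne
        _ ≤ 2 * (inN F w ∩ P').ncard :=
          Nat.mul_le_mul_left 2 (Set.ncard_le_ncard (hmono w hw.2) (Set.toFinite _))
    · rcases hw with rfl | hw
      · -- w = x
        rw [hinx_card]
        omega
      · rcases hw with hw | hw
        · rcases hw with hw | hw
          · -- small vertex: a source
            exact absurd (hsmall w (hS₀sub hw)) hne
          · -- medium vertex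
            have hLP' : L w ⊆ inN F w ∩ P' := by
              intro u hu
              refine ⟨hLsub w hw hu, Or.inr (Set.mem_insert_of_mem _ (Or.inr ?_))⟩
              exact Set.mem_biUnion hw hu
            have := Set.ncard_le_ncard hLP' (Set.toFinite _)
            rw [hLcard w hw] at this
            rw [(hmed w (hMcsub hw)).2]
            omega
        · -- leaf of a medium vertex: a source
          simp only [hT, Set.mem_iUnion] at hw
          obtain ⟨m, hm, hum⟩ := hw
          exact absurd (hleaf m (Or.inr (hMcsub hm)) w (hLsub m hm hum)).1 hne
  refine ⟨P', hHV, hxP', hagree, ?_⟩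
  rw [hPQR, hRcard]
  have h1 : K + (r - ℓ') = max δ r - ℓ' := by omega
  rw [mul_comm (r - ℓ') (M - 1)]
  omega
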